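/- Let G be a hypergraph and A, B ⊆ E(G). Then itw(A ∪ B) ≤ max(itw(A), itw(B)) + min(λ(A), λ(B)). -/

import Mathlib

open scoped Classical

namespace PaperAux

open SimpleGraph

variable {α β : Type} (G₁ : SimpleGraph α) (G₂ : SimpleGraph β) (a : α) (b : β)

/-- Two graphs glued by a single bridge edge between `a` and `b`. -/
def glue : SimpleGraph (α ⊕ β) where
  Adj x y := match x, y with
    | .inl i, .inl j => G₁.Adj i j
    | .inr i, .inr j => G₂.Adj i j
    | .inl i, .inr j => i = a ∧ j = b
    | .inr i, .inl j => i = b ∧ j = a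
  symm := ⟨by rintro (i|i) (j|j) h <;> simp_all <;> exact h.symm⟩
  loopless := ⟨by
    rintro (i|i) h
    · exact G₁.loopless.irrefl i h
    · exact G₂.loopless.irrefl i h⟩

variable {G₁ G₂ a b}

lemma glue_adj_ll {i j : α} : (glue G₁ G₂ a b).Adj (.inl i) (.inl j) ↔ G₁.Adj i j := Iff.rfl
lemma glue_adj_rr {i j : β} : (glue G₁ G₂ a b).Adj (.inr i) (.inr j) ↔ G₂.Adj i j := Iff.rfl
lemma glue_adj_lr {i : α} {j : β} :
    (glue G₁ G₂ a b).Adj (.inl i) (.inr j) ↔ i = a ∧ j = b := Iff.rfl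
lemma glue_adj_rl {i : β} {j : α} :
    (glue G₁ G₂ a b).Adj (.inr i) (.inl j) ↔ i = b ∧ j = a := Iff.rfl

lemma glue_connected (h₁ : G₁.Connected) (h₂ : G₂.Connected) :
    (glue G₁ G₂ a b).Connected := by
  have hl : ∀ i : α, (glue G₁ G₂ a b).Reachable (.inl i) (.inl a) := fun i =>
    Reachable.map (⟨Sum.inl, fun h => h⟩ : G₁ →g glue G₁ G₂ a b) (h₁ i a)
  have hr : ∀ j : β, (glue G₁ G₂ a b).Reachable (.inr j) (.inr b) := fun j =>
    Reachable.map (⟨Sum.inr, fun h => h⟩ : G₂ →g glue G₁ G₂ a b) (h₂ j b)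
  have hab : (glue G₁ G₂ a b).Reachable (.inl a) (.inr b) :=
    (Adj.reachable (by exact ⟨rfl, rfl⟩))
  haveI : Nonempty (α ⊕ β) := ⟨.inl a⟩
  refine ⟨?_⟩
  rintro (i|j) (i'|j')
  · exact (hl i).trans (hl i').symm
  · exact ((hl i).trans hab).trans (hr j').symm
  · exact ((hr j).trans hab.symm).trans (hl i').symm
  · exact (hr j).trans (hr j').symm

lemma glue_bridge_mem_iff {x y : α ⊕ β} (p : (glue G₁ G₂ a b).Walk x y)
    (hn : p.edges.Nodup) :
    s(Sum.inl a, Sum.inr b) ∈ p.edges ↔ x.isLeft ≠ y.isLeft := by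
  induction p with
  | nil => simp
  | @cons x z y h p ih =>
    rw [Walk.edges_cons, List.nodup_cons] at hn
    obtain ⟨hne, hn'⟩ := hn
    have ih' := ih hn'
    by_cases hb : s(x, z) = s(Sum.inl a, Sum.inr b)
    · have hxz : x.isLeft ≠ z.isLeft := by
        rw [Sym2.eq_iff] at hb
        rcases hb with ⟨rfl, rfl⟩ | ⟨rfl, rfl⟩ <;> simp
      have : s(Sum.inl a, Sum.inr b) ∉ p.edges := hb ▸ hne
      have hzy : z.isLeft = y.isLeft := by
        by_contra hc
        exact this (ih'.2 hc)
      simp only [Walk.edges_cons, List.mem_cons]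
      constructor
      · intro _
        rw [← hzy]
        exact hxz
      · intro _
        exact Or.inl hb.symm
    · have hxz : x.isLeft = z.isLeft := by
        by_contra hc
        apply hb
        rcases x with i | i <;> rcases z with j | j <;> simp at hc
        · obtain ⟨rfl, rfl⟩ := (glue_adj_lr).mp h
          rfl
        · obtain ⟨rfl, rfl⟩ := (glue_adj_rl).mp h
          exact Sym2.eq_swap
      have hb' : s(Sum.inl a, Sum.inr b) ≠ s(x, z) := Ne.symm hb
      simp only [Walk.edges_cons, List.mem_cons, hb', false_or]
      rw [ih', hxz]

/-- Lift a walk staying on the left side. -/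
lemma glue_lift_left :
    ∀ {x y : α ⊕ β} (p : (glue G₁ G₂ a b).Walk x y),
      s(Sum.inl a, Sum.inr b) ∉ p.edges → ∀ {u v : α}, x = .inl u → y = .inl v →
      ∃ q : G₁.Walk u v, q.support.map Sum.inl = p.support ∧
        q.edges.map (Sym2.map Sum.inl) = p.edges := by
  intro x y p
  induction p with
  | nil =>
    rintro - u v rfl h
    obtain rfl : u = v := by injection h
    exact ⟨Walk.nil, by simp, by simp⟩
  | @cons x z y h p ih =>
    rintro hne u v rfl rfl
    rcases z with j | j
    · have hadj : G₁.Adj u j := h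
      obtain ⟨q, hs, he⟩ := ih (fun hm => hne (by simp [hm])) rfl rfl
      refine ⟨Walk.cons hadj q, by simpa using hs, by simpa using he⟩
    · obtain ⟨rfl, rfl⟩ := (glue_adj_lr).mp h
      exact absurd (by simp) hne

lemma glue_lift_right :
    ∀ {x y : α ⊕ β} (p : (glue G₁ G₂ a b).Walk x y),
      s(Sum.inl a, Sum.inr b) ∉ p.edges → ∀ {u v : β}, x = .inr u → y = .inr v →
      ∃ q : G₂.Walk u v, q.support.map Sum.inr = p.support ∧
        q.edges.map (Sym2.map Sum.inr) = p.edges := by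
  intro x y p
  induction p with
  | nil =>
    rintro - u v rfl h
    obtain rfl : u = v := by injection h
    exact ⟨Walk.nil, by simp, by simp⟩
  | @cons x z y h p ih =>
    rintro hne u v rfl rfl
    rcases z with j | j
    · obtain ⟨rfl, rfl⟩ := (glue_adj_rl).mp h
      exact absurd (by simp [Sym2.eq_swap]) hne
    · have hadj : G₂.Adj u j := h
      obtain ⟨q, hs, he⟩ := ih (fun hm => hne (by simp [hm])) rfl rfl
      refine ⟨Walk.cons hadj q, by simpa using hs, by simpa using he⟩

lemma cycle_of_lift {γ : Type} {H : SimpleGraph γ} {f : γ → α ⊕ β} {u : γ} {v : α ⊕ β}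
    (c : (glue G₁ G₂ a b).Walk v v) (hc : c.IsCycle) (q : H.Walk u u)
    (hs : q.support.map f = c.support) (he : q.edges.map (Sym2.map f) = c.edges) :
    q.IsCycle := by
  rw [Walk.isCycle_def]
  refine ⟨⟨?_⟩, ?_, ?_⟩
  · exact List.Nodup.of_map _ (he ▸ hc.isTrail.edges_nodup)
  · rintro rfl
    have h3 := hc.three_le_length
    have : c.edges = [] := by rw [← he]; simp
    have : c.length = 0 := by
      have := congrArg List.length this
      simpa [Walk.length_edges] using this
    omega
  · have : q.support.tail.map f = c.support.tail := by
      rw [← hs]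
      exact List.map_tail
    exact List.Nodup.of_map _ (this ▸ hc.support_nodup)

lemma glue_acyclic (h₁ : G₁.IsAcyclic) (h₂ : G₂.IsAcyclic) :
    (glue G₁ G₂ a b).IsAcyclic := by
  intro v c hc
  have hbr : s(Sum.inl a, Sum.inr b) ∉ c.edges := by
    rw [glue_bridge_mem_iff c hc.isTrail.edges_nodup]
    simp
  rcases v with u | u
  · obtain ⟨q, hs, he⟩ := glue_lift_left c hbr rfl rfl
    exact h₁ q (cycle_of_lift c hc q hs he)
  · obtain ⟨q, hs, he⟩ := glue_lift_right c hbr rfl rfl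
    exact h₂ q (cycle_of_lift c hc q hs he)

lemma glue_isTree (h₁ : G₁.IsTree) (h₂ : G₂.IsTree) : (glue G₁ G₂ a b).IsTree :=
  ⟨glue_connected h₁.isConnected h₂.isConnected, glue_acyclic h₁.IsAcyclic h₂.IsAcyclic⟩


lemma connected_induce_univ {W : Type} {G : SimpleGraph W} (h : G.Connected) :
    (G.induce Set.univ).Connected :=
  SimpleGraph.Connected.map (SimpleGraph.induceUnivIso G).symm.toHom
    (SimpleGraph.induceUnivIso G).symm.toEquiv.surjective h

lemma glue_induce_inl {s₀ : Set α} (h : (G₁.induce s₀).Connected) :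
    ((glue G₁ G₂ a b).induce (Sum.inl '' s₀)).Connected := by
  let e : G₁.induce s₀ ≃g (glue G₁ G₂ a b).induce (Sum.inl '' s₀) :=
    { toEquiv := Equiv.Set.image Sum.inl s₀ Sum.inl_injective
      map_rel_iff' := by
        rintro ⟨i, hi⟩ ⟨j, hj⟩
        simp [Equiv.Set.image, Equiv.Set.imageOfInjOn, glue_adj_ll] }
  exact SimpleGraph.Connected.map e.toHom e.toEquiv.surjective h

lemma glue_induce_inr {s₀ : Set β} (h : (G₂.induce s₀).Connected) :
    ((glue G₁ G₂ a b).induce (Sum.inr '' s₀)).Connected := by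
  let e : G₂.induce s₀ ≃g (glue G₁ G₂ a b).induce (Sum.inr '' s₀) :=
    { toEquiv := Equiv.Set.image Sum.inr s₀ Sum.inr_injective
      map_rel_iff' := by
        rintro ⟨i, hi⟩ ⟨j, hj⟩
        simp [Equiv.Set.image, Equiv.Set.imageOfInjOn, glue_adj_rr] }
  exact SimpleGraph.Connected.map e.toHom e.toEquiv.surjective h

end PaperAux


namespace Paper

variable {V : Type} {E : Type}

/-- Vertices covered by a set of hyperedges. -/
noncomputable def Vs (F : E → Finset V) (A : Finset E) : Finset V := A.biUnion F

/-- Boundary of `A` relative to a ground set of hyperedges. -/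
noncomputable def bdIn (F : E → Finset V) (ground A : Finset E) : Finset V :=
  Vs F A ∩ Vs F (ground \ A)

/-- Boundary size. -/
noncomputable def lamIn (F : E → Finset V) (ground A : Finset E) : ℕ :=
  (bdIn F ground A).card

/-- Interior. -/
noncomputable def intIn (F : E → Finset V) (ground A : Finset E) : Finset V :=
  Vs F A \ bdIn F ground A

/-- A set of hyperedges is well-linked. -/
def WellLinkedIn (F : E → Finset V) (ground A : Finset E) : Prop :=
  ∀ A1 A2 : Finset E, A1 ∪ A2 = A → A1 ∩ A2 = ∅ →
    lamIn F ground A ≤ lamIn F ground A1 ∨ lamIn F ground A ≤ lamIn F ground A2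

/-- A nonempty set of hyperedges is internally connected. -/
def InternallyConnectedIn (F : E → Finset V) (ground A : Finset E) : Prop :=
  A.Nonempty ∧ ¬ ∃ B1 B2 : Finset E, B1 ∪ B2 = A ∧ B1 ∩ B2 = ∅ ∧
    B1.Nonempty ∧ B2.Nonempty ∧
    bdIn F ground B1 ⊆ bdIn F ground A ∧ bdIn F ground B2 ⊆ bdIn F ground A

/-- Internal component: an inclusion-maximal internally connected subset. -/
def InternalComponentIn (F : E → Finset V) (ground B B' : Finset E) : Prop :=
  B' ⊆ B ∧ InternallyConnectedIn F ground B' ∧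
    ∀ B'' : Finset E, B' ⊆ B'' → B'' ⊆ B → InternallyConnectedIn F ground B'' → B'' = B'

/-- A tree decomposition of the graph with adjacency `Adj` induced on vertex set `s`. -/
structure TreeDecompOn (Adj : V → V → Prop) (s : Finset V) where
  ι : Type
  fin : Fintype ι
  tr : SimpleGraph ι
  isTree : tr.IsTree
  bag : ι → Finset V
  bag_sub : ∀ i, bag i ⊆ s
  cover_v : ∀ v ∈ s, ∃ i, v ∈ bag i
  cover_e : ∀ u ∈ s, ∀ v ∈ s, Adj u v → ∃ i, u ∈ bag i ∧ v ∈ bag i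
  conn : ∀ v ∈ s, (tr.induce {i | v ∈ bag i}).Connected

/-- Treewidth (an integer, `-1` for the empty graph) of the graph
with adjacency `Adj` induced on the vertex set `s`. -/
noncomputable def tw (Adj : V → V → Prop) (s : Finset V) : ℤ :=
  sInf {k : ℤ | ∃ D : TreeDecompOn Adj s, ∀ i, ((D.bag i).card : ℤ) ≤ k + 1}

/-- Minimum size of a treewidth-`η`-modulator of the graph induced on `s`. -/
noncomputable def twmodOn (Adj : V → V → Prop) (s : Finset V) (η : ℕ) : ℕ :=
  sInf {n : ℕ | ∃ X : Finset V, X ⊆ s ∧ X.card ≤ n ∧ tw Adj (s \ X) ≤ (η : ℤ)}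

/-- Adjacency of the primal graph of a hypergraph. -/
def primalAdj (F : E → Finset V) : V → V → Prop :=
  fun u v => u ≠ v ∧ ∃ e : E, u ∈ F e ∧ v ∈ F e

/-- Internal treewidth of a set of hyperedges. -/
noncomputable def itw [Fintype E] (F : E → Finset V) (A : Finset E) : ℤ :=
  tw (primalAdj F) (intIn F Finset.univ A)

/-- The hypergraph given by `F` is (isomorphic to) the support hypergraph of `G`:
it has exactly one hyperedge `{v}` for each vertex `v` and exactly one hyperedge
`{u, v}` for each edge `uv`, and no other hyperedges. -/
def IsSupport (G : SimpleGraph V) (F : E → Finset V) : Prop :=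
  (∀ e : E, (∃ v : V, F e = {v}) ∨ (∃ u v : V, G.Adj u v ∧ F e = {u, v})) ∧
  (∀ v : V, ∃! e : E, F e = {v}) ∧
  (∀ u v : V, G.Adj u v → ∃! e : E, F e = ({u, v} : Finset V))

/-- `H` is a topological minor of `G` using only vertices in `s`. -/
def IsTopMinorOn {α β : Type} (H : SimpleGraph α) (G : SimpleGraph β) (s : Set β) : Prop :=
  ∃ φ : α → β, (∀ a, φ a ∈ s) ∧ Function.Injective φ ∧
    ∃ P : ∀ u v : α, H.Adj u v → G.Walk (φ u) (φ v),
      (∀ u v (h : H.Adj u v), (P u v h).IsPath) ∧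
      (∀ u v (h : H.Adj u v), ∀ w ∈ (P u v h).support, w ∈ s) ∧
      (∀ u v (h : H.Adj u v) (w : β), w ∈ (P u v h).support → w ≠ φ u → w ≠ φ v →
        ∀ a : α, φ a ≠ w) ∧
      (∀ u v u' v' (h : H.Adj u v) (h' : H.Adj u' v'),
        (s(u, v) : Sym2 α) ≠ s(u', v') →
        ∀ w : β, w ∈ (P u v h).support → w ∈ (P u' v' h').support → w = φ u ∨ w = φ v)

/-- `H` is a topological minor of `G`. -/
def IsTopMinor {α β : Type} (H : SimpleGraph α) (G : SimpleGraph β) : Prop :=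
  IsTopMinorOn H G Set.univ

/-- A rooted superbranch decomposition of a hypergraph with hyperedge type `E`:
a finite rooted tree (given by a parent map) whose leaves are in bijection with `E`
and in which every non-leaf node has at least two children. -/
structure SBD (E : Type) [Fintype E] where
  ι : Type
  fin : Fintype ι
  root : ι
  par : ι → ι
  par_root : par root = root
  reach : ∀ i : ι, ∃ n : ℕ, par^[n] i = root
  leafMap : E → ι
  inj : Function.Injective leafMap
  map_leaf : ∀ (e : E) (j : ι), par j = leafMap e → j = leafMap e
  leaf_surj : ∀ i : ι, (∀ j : ι, par j = i → j = i) → ∃ e : E, leafMap e = i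
  branch : ∀ i : ι, (∃ j : ι, par j = i ∧ j ≠ i) → 2 ≤ {j : ι | par j = i ∧ j ≠ i}.ncard

/-- The set `L[t]` of hyperedges assigned to leaves below `t`. -/
noncomputable def SBD.Lset [Fintype E] (T : SBD E) (t : T.ι) : Finset E :=
  Finset.univ.filter fun e => ∃ n : ℕ, T.par^[n] (T.leafMap e) = t

/-- The children of the root. -/
noncomputable def SBD.chd [Fintype E] (T : SBD E) : Finset T.ι :=
  letI := T.fin
  Finset.univ.filter fun j => T.par j = T.root ∧ j ≠ T.root

/-- The vertex sets of the hyperedges of the torso of the root: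
the hyperedge corresponding to a child `t` has vertex set `bd(L[t])`. -/
noncomputable def SBD.Ft [Fintype E] (T : SBD E) (F : E → Finset V) : T.ι → Finset V :=
  fun t => bdIn F Finset.univ (T.Lset t)

/-- Downwards well-linkedness of a superbranch decomposition. -/
def DownWL [Fintype E] (F : E → Finset V) (T : SBD E) : Prop :=
  ∀ t : T.ι, WellLinkedIn F Finset.univ (T.Lset t)

/-- The adhesion size of the superbranch decomposition is at most `α`. -/
def AdhLE [Fintype E] (F : E → Finset V) (T : SBD E) (α : ℕ) : Prop :=
  ∀ t : T.ι, t ≠ T.root → lamIn F Finset.univ (T.Lset t) ≤ α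

/-- A rooted tree decomposition (given by a root and a tree decomposition). -/
structure RTreeDecompOn (Adj : V → V → Prop) (s : Finset V) extends TreeDecompOn Adj s where
  root : ι

/-- A `(k, c)`-protrusion decomposition exists. -/
def HasProtrusionDecomp (Adj : V → V → Prop) (s : Finset V) (k : ℝ) (c : ℕ) : Prop :=
  ∃ D : RTreeDecompOn Adj s,
    ((D.bag D.root).card : ℝ) ≤ k ∧
    ((D.tr.neighborSet D.root).ncard : ℝ) ≤ k ∧
    ∀ i, i ≠ D.root → (D.bag i).card ≤ c

/-- A finite simple graph on the vertex universe `ℕ`. -/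
structure FGraph where
  verts : Finset ℕ
  Adj : ℕ → ℕ → Prop
  symm : ∀ u v, Adj u v → Adj v u
  loopless : ∀ u, ¬ Adj u u
  supp : ∀ u v, Adj u v → u ∈ verts ∧ v ∈ verts

/-- The `SimpleGraph` of an `FGraph`. -/
def FGraph.toSG (G : FGraph) : SimpleGraph ℕ where
  Adj := G.Adj
  symm := ⟨fun u v h => G.symm u v h⟩
  loopless := ⟨fun u h => G.loopless u h⟩

/-- A rooted tree decomposition, with the rooted tree given by a parent map and
connectivity phrased for rooted trees. -/
structure RootedTD (Adj : V → V → Prop) (s : Finset V) where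
  ι : Type
  fin : Fintype ι
  root : ι
  par : ι → ι
  par_root : par root = root
  reach : ∀ i : ι, ∃ n : ℕ, par^[n] i = root
  bag : ι → Finset V
  bag_sub : ∀ i, bag i ⊆ s
  cover_v : ∀ v ∈ s, ∃ i, v ∈ bag i
  cover_e : ∀ u ∈ s, ∀ v ∈ s, Adj u v → ∃ i, u ∈ bag i ∧ v ∈ bag i
  conn : ∀ v ∈ s, ∃ m : ι, v ∈ bag m ∧ ∀ i : ι, v ∈ bag i →
    ∃ n : ℕ, par^[n] i = m ∧ ∀ l ≤ n, v ∈ bag (par^[l] i)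



section Helpers

variable {V : Type} {E : Type}

/-- The one-node tree decomposition. -/
noncomputable def trivialTD (Adj : V → V → Prop) (s : Finset V) : TreeDecompOn Adj s where
  ι := PUnit
  fin := inferInstance
  tr := ⊥
  isTree := ⟨⟨fun u v => by rw [Subsingleton.elim u v]⟩, SimpleGraph.isAcyclic_bot⟩
  bag := fun _ => s
  bag_sub := fun _ => le_refl s
  cover_v := fun _ hv => ⟨PUnit.unit, hv⟩
  cover_e := fun _ hu _ hv _ => ⟨PUnit.unit, hu, hv⟩
  conn := fun v hv => by
    haveI : Nonempty {i : PUnit.{1} // i ∈ {i : PUnit.{1} | v ∈ s}} := ⟨⟨PUnit.unit, hv⟩⟩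
    haveI : Subsingleton {i : PUnit.{1} // i ∈ {i : PUnit.{1} | v ∈ s}} :=
      ⟨fun x y => Subtype.ext (Subsingleton.elim _ _)⟩
    exact ⟨fun x y => by rw [Subsingleton.elim x y]⟩

lemma nonempty_twSet (Adj : V → V → Prop) (s : Finset V) :
    {k : ℤ | ∃ D : TreeDecompOn Adj s, ∀ i, ((D.bag i).card : ℤ) ≤ k + 1}.Nonempty :=
  ⟨(s.card : ℤ) - 1, trivialTD Adj s, fun _ => by simp [trivialTD]⟩

lemma bddBelow_twSet (Adj : V → V → Prop) (s : Finset V) :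
    BddBelow {k : ℤ | ∃ D : TreeDecompOn Adj s, ∀ i, ((D.bag i).card : ℤ) ≤ k + 1} := by
  refine ⟨-1, ?_⟩
  rintro k ⟨D, hD⟩
  haveI : Nonempty D.ι := D.isTree.isConnected.nonempty
  obtain ⟨i⟩ := this
  have h1 := hD i
  have h2 : (0 : ℤ) ≤ ((D.bag i).card : ℤ) := Int.natCast_nonneg _
  linarith

lemma exists_td (Adj : V → V → Prop) (s : Finset V) :
    ∃ D : TreeDecompOn Adj s, ∀ i, ((D.bag i).card : ℤ) ≤ tw Adj s + 1 :=
  Int.csInf_mem (nonempty_twSet Adj s) (bddBelow_twSet Adj s)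

lemma tw_le_of_td {Adj : V → V → Prop} {s : Finset V} {k : ℤ} (D : TreeDecompOn Adj s)
    (h : ∀ i, ((D.bag i).card : ℤ) ≤ k + 1) : tw Adj s ≤ k :=
  csInf_le (bddBelow_twSet Adj s) ⟨D, h⟩

variable [Fintype E] {F : E → Finset V}

lemma mem_Vs {v : V} {A : Finset E} : v ∈ Vs F A ↔ ∃ e ∈ A, v ∈ F e := Finset.mem_biUnion

lemma mem_intIn {v : V} {A : Finset E} :
    v ∈ intIn F Finset.univ A ↔ v ∈ Vs F A ∧ ∀ e ∉ A, v ∉ F e := by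
  rw [intIn, bdIn, Finset.mem_sdiff, Finset.mem_inter]
  constructor
  · rintro ⟨h1, h2⟩
    refine ⟨h1, fun e he hf => h2 ⟨h1, mem_Vs.mpr ⟨e, Finset.mem_sdiff.mpr ⟨Finset.mem_univ e, he⟩, hf⟩⟩⟩
  · rintro ⟨h1, h2⟩
    refine ⟨h1, ?_⟩
    rintro ⟨-, hb⟩
    obtain ⟨e, he, hf⟩ := mem_Vs.mp hb
    exact h2 e (Finset.mem_sdiff.mp he).2 hf

lemma mem_bdIn {v : V} {A : Finset E} :
    v ∈ bdIn F Finset.univ A ↔ v ∈ Vs F A ∧ ∃ e ∉ A, v ∈ F e := by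
  rw [bdIn, Finset.mem_inter]
  constructor
  · rintro ⟨h1, h2⟩
    obtain ⟨e, he, hf⟩ := mem_Vs.mp h2
    exact ⟨h1, e, (Finset.mem_sdiff.mp he).2, hf⟩
  · rintro ⟨h1, e, he, hf⟩
    exact ⟨h1, mem_Vs.mpr ⟨e, Finset.mem_sdiff.mpr ⟨Finset.mem_univ e, he⟩, hf⟩⟩

lemma intIn_union_left (A B : Finset E) :
    intIn F Finset.univ A ⊆ intIn F Finset.univ (A ∪ B) := by
  intro v hv
  rw [mem_intIn] at hv ⊢
  obtain ⟨h1, h2⟩ := hv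
  obtain ⟨e, he, hf⟩ := mem_Vs.mp h1
  refine ⟨mem_Vs.mpr ⟨e, Finset.mem_union_left _ he, hf⟩, fun e' he' hf' =>
    h2 e' (fun hA => he' (Finset.mem_union_left _ hA)) hf'⟩

lemma intIn_union_right (A B : Finset E) :
    intIn F Finset.univ B ⊆ intIn F Finset.univ (A ∪ B) := by
  rw [Finset.union_comm]
  exact intIn_union_left B A

lemma cover_fact {A B : Finset E} {v : V} (hv : v ∈ intIn F Finset.univ (A ∪ B)) :
    v ∈ bdIn F Finset.univ A ∨ v ∈ intIn F Finset.univ A ∨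
      (v ∈ intIn F Finset.univ B ∧ v ∉ intIn F Finset.univ A) := by
  rw [mem_intIn] at hv
  obtain ⟨h1, h2⟩ := hv
  by_cases hA : v ∈ Vs F A
  · by_cases hbd : ∃ e ∉ A, v ∈ F e
    · exact Or.inl (mem_bdIn.mpr ⟨hA, hbd⟩)
    · push_neg at hbd
      exact Or.inr (Or.inl (mem_intIn.mpr ⟨hA, hbd⟩))
  · have hB : v ∈ Vs F B := by
      obtain ⟨e, he, hf⟩ := mem_Vs.mp h1
      rcases Finset.mem_union.mp he with h | h
      · exact absurd (mem_Vs.mpr ⟨e, h, hf⟩) hA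
      · exact mem_Vs.mpr ⟨e, h, hf⟩
    have hInt : v ∈ intIn F Finset.univ B := by
      refine mem_intIn.mpr ⟨hB, fun e he hf => ?_⟩
      by_cases heA : e ∈ A
      · exact hA (mem_Vs.mpr ⟨e, heA, hf⟩)
      · exact h2 e (fun hc => (Finset.mem_union.mp hc).elim heA he) hf
    exact Or.inr (Or.inr ⟨hInt, fun hc => hA (mem_intIn.mp hc).1⟩)

lemma edge_fact {A B : Finset E} {u v : V} (hu : u ∈ intIn F Finset.univ (A ∪ B))
    (hv : v ∈ intIn F Finset.univ (A ∪ B)) (hadj : primalAdj F u v) :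
    ((u ∈ intIn F Finset.univ A ∨ u ∈ bdIn F Finset.univ A) ∧
      (v ∈ intIn F Finset.univ A ∨ v ∈ bdIn F Finset.univ A)) ∨
    (((u ∈ intIn F Finset.univ B ∧ u ∉ intIn F Finset.univ A) ∨ u ∈ bdIn F Finset.univ A) ∧
      ((v ∈ intIn F Finset.univ B ∧ v ∉ intIn F Finset.univ A) ∨ v ∈ bdIn F Finset.univ A)) := by
  obtain ⟨-, e, hue, hve⟩ := hadj
  have he : e ∈ A ∪ B := by
    by_contra h
    exact (mem_intIn.mp hu).2 e h hue
  by_cases heA : e ∈ A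
  · have claim : ∀ w : V, w ∈ intIn F Finset.univ (A ∪ B) → w ∈ F e →
        w ∈ intIn F Finset.univ A ∨ w ∈ bdIn F Finset.univ A := by
      intro w hw hwe
      have hVA : w ∈ Vs F A := mem_Vs.mpr ⟨e, heA, hwe⟩
      by_cases hbd : ∃ e' ∉ A, w ∈ F e'
      · exact Or.inr (mem_bdIn.mpr ⟨hVA, hbd⟩)
      · push_neg at hbd
        exact Or.inl (mem_intIn.mpr ⟨hVA, hbd⟩)
    exact Or.inl ⟨claim u hu hue, claim v hv hve⟩
  · have heB : e ∈ B := (Finset.mem_union.mp he).elim (fun h => absurd h heA) id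
    have claim : ∀ w : V, w ∈ intIn F Finset.univ (A ∪ B) → w ∈ F e →
        (w ∈ intIn F Finset.univ B ∧ w ∉ intIn F Finset.univ A) ∨ w ∈ bdIn F Finset.univ A := by
      intro w hw hwe
      by_cases hVA : w ∈ Vs F A
      · exact Or.inr (mem_bdIn.mpr ⟨hVA, e, heA, hwe⟩)
      · have hVB : w ∈ Vs F B := mem_Vs.mpr ⟨e, heB, hwe⟩
        have hInt : w ∈ intIn F Finset.univ B := by
          refine mem_intIn.mpr ⟨hVB, fun e' he' hf' => ?_⟩
          by_cases he'A : e' ∈ A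
          · exact hVA (mem_Vs.mpr ⟨e', he'A, hf'⟩)
          · exact (mem_intIn.mp hw).2 e' (fun hc => (Finset.mem_union.mp hc).elim he'A he') hf'
        exact Or.inl ⟨hInt, fun hc => hVA (mem_intIn.mp hc).1⟩
    exact Or.inr ⟨claim u hu hue, claim v hv hve⟩

end Helpers


lemma key [Fintype V] [Fintype E] (F : E → Finset V) (A B : Finset E) :
    itw F (A ∪ B) ≤ max (itw F A) (itw F B) + (lamIn F Finset.univ A : ℤ) := by
  classical
  set sU := intIn F Finset.univ (A ∪ B) with hsUdef
  set sA := intIn F Finset.univ A with hsAdef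
  set sB := intIn F Finset.univ B with hsBdef
  obtain ⟨DA, hDA⟩ := exists_td (primalAdj F) sA
  obtain ⟨DB, hDB⟩ := exists_td (primalAdj F) sB
  letI := DA.fin
  letI := DB.fin
  haveI hNA : Nonempty DA.ι := DA.isTree.isConnected.nonempty
  haveI hNB : Nonempty DB.ι := DB.isTree.isConnected.nonempty
  have hDA' : ∀ i, ((DA.bag i).card : ℤ) ≤ itw F A + 1 := hDA
  have hDB' : ∀ j, ((DB.bag j).card : ℤ) ≤ itw F B + 1 := hDB
  set S : Finset V := bdIn F Finset.univ A ∩ sU with hSdef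
  have hAsub : sA ⊆ sU := intIn_union_left A B
  have hBsub : sB ⊆ sU := intIn_union_right A B
  have hSsub : S ⊆ sU := Finset.inter_subset_right
  have hScard : (S.card : ℤ) ≤ (lamIn F Finset.univ A : ℤ) := by
    exact_mod_cast Finset.card_le_card (Finset.inter_subset_left (s₂ := sU))
  have hSA : ∀ v, v ∈ sA → v ∉ S := by
    intro v hv hvS
    obtain ⟨-, e, he, hf⟩ := mem_bdIn.mp (Finset.mem_inter.mp hvS).1
    exact (mem_intIn.mp hv).2 e he hf
  have hcover : ∀ v ∈ sU, v ∈ S ∨ v ∈ sA ∨ (v ∈ sB ∧ v ∉ sA) := by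
    intro v hv
    rcases cover_fact hv with h | h | ⟨h1, h2⟩
    · exact Or.inl (Finset.mem_inter.mpr ⟨h, hv⟩)
    · exact Or.inr (Or.inl h)
    · exact Or.inr (Or.inr ⟨h1, h2⟩)
  set rA := Classical.arbitrary DA.ι with hrA
  set rB := Classical.arbitrary DB.ι with hrB
  set bagf : DA.ι ⊕ DB.ι → Finset V :=
    Sum.elim (fun i => DA.bag i ∪ S) (fun j => (DB.bag j ∩ (sB \ sA)) ∪ S) with hbagf
  have hedge : ∀ u ∈ sU, ∀ v ∈ sU, primalAdj F u v →
      ((u ∈ sA ∨ u ∈ S) ∧ (v ∈ sA ∨ v ∈ S)) ∨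
      (((u ∈ sB ∧ u ∉ sA) ∨ u ∈ S) ∧ ((v ∈ sB ∧ v ∉ sA) ∨ v ∈ S)) := by
    intro u hu v hv hadj
    have conv : ∀ w ∈ sU, w ∈ bdIn F Finset.univ A → w ∈ S := fun w hw h =>
      Finset.mem_inter.mpr ⟨h, hw⟩
    rcases edge_fact hu hv hadj with ⟨h1, h2⟩ | ⟨h1, h2⟩
    · exact Or.inl ⟨h1.imp id (conv u hu), h2.imp id (conv v hv)⟩
    · exact Or.inr ⟨h1.imp id (conv u hu), h2.imp id (conv v hv)⟩
  let D : TreeDecompOn (primalAdj F) sU :=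
  { ι := DA.ι ⊕ DB.ι
    fin := inferInstance
    tr := PaperAux.glue DA.tr DB.tr rA rB
    isTree := PaperAux.glue_isTree DA.isTree DB.isTree
    bag := bagf
    bag_sub := by
      rintro (i | j) v hv
      · rcases Finset.mem_union.mp hv with h | h
        · exact hAsub (DA.bag_sub i h)
        · exact hSsub h
      · rcases Finset.mem_union.mp hv with h | h
        · exact hBsub (Finset.mem_sdiff.mp (Finset.mem_inter.mp h).2).1
        · exact hSsub h
    cover_v := by
      intro v hv
      rcases hcover v hv with hvS | hvA | ⟨hvB, hvnA⟩
      · exact ⟨Sum.inl rA, Finset.mem_union_right _ hvS⟩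
      · obtain ⟨i, hi⟩ := DA.cover_v v hvA
        exact ⟨Sum.inl i, Finset.mem_union_left _ hi⟩
      · obtain ⟨j, hj⟩ := DB.cover_v v hvB
        exact ⟨Sum.inr j, Finset.mem_union_left _
          (Finset.mem_inter.mpr ⟨hj, Finset.mem_sdiff.mpr ⟨hvB, hvnA⟩⟩)⟩
    cover_e := by
      intro u hu v hv hadj
      rcases hedge u hu v hv hadj with ⟨hu', hv'⟩ | ⟨hu', hv'⟩
      · rcases hu' with huA | huS <;> rcases hv' with hvA | hvS
        · obtain ⟨i, h1, h2⟩ := DA.cover_e u huA v hvA hadj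
          exact ⟨Sum.inl i, Finset.mem_union_left _ h1, Finset.mem_union_left _ h2⟩
        · obtain ⟨i, h1⟩ := DA.cover_v u huA
          exact ⟨Sum.inl i, Finset.mem_union_left _ h1, Finset.mem_union_right _ hvS⟩
        · obtain ⟨i, h1⟩ := DA.cover_v v hvA
          exact ⟨Sum.inl i, Finset.mem_union_right _ huS, Finset.mem_union_left _ h1⟩
        · exact ⟨Sum.inl rA, Finset.mem_union_right _ huS, Finset.mem_union_right _ hvS⟩
      · rcases hu' with huB | huS <;> rcases hv' with hvB | hvS
        · obtain ⟨j, h1, h2⟩ := DB.cover_e u huB.1 v hvB.1 hadj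
          exact ⟨Sum.inr j,
            Finset.mem_union_left _
              (Finset.mem_inter.mpr ⟨h1, Finset.mem_sdiff.mpr ⟨huB.1, huB.2⟩⟩),
            Finset.mem_union_left _
              (Finset.mem_inter.mpr ⟨h2, Finset.mem_sdiff.mpr ⟨hvB.1, hvB.2⟩⟩)⟩
        · obtain ⟨j, h1⟩ := DB.cover_v u huB.1
          exact ⟨Sum.inr j,
            Finset.mem_union_left _
              (Finset.mem_inter.mpr ⟨h1, Finset.mem_sdiff.mpr ⟨huB.1, huB.2⟩⟩),
            Finset.mem_union_right _ hvS⟩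
        · obtain ⟨j, h1⟩ := DB.cover_v v hvB.1
          exact ⟨Sum.inr j, Finset.mem_union_right _ huS,
            Finset.mem_union_left _
              (Finset.mem_inter.mpr ⟨h1, Finset.mem_sdiff.mpr ⟨hvB.1, hvB.2⟩⟩)⟩
        · exact ⟨Sum.inr rB, Finset.mem_union_right _ huS, Finset.mem_union_right _ hvS⟩
    conn := by
      intro v hv
      by_cases hvS : v ∈ S
      · have hset : {x : DA.ι ⊕ DB.ι | v ∈ bagf x} = Set.univ := by
          ext (i | j) <;> simp [hbagf, Finset.mem_union, hvS]
        rw [hset]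
        exact PaperAux.connected_induce_univ
          (PaperAux.glue_connected DA.isTree.isConnected DB.isTree.isConnected)
      · rcases hcover v hv with h | hvA | ⟨hvB, hvnA⟩
        · exact absurd h hvS
        · have hnB : v ∉ sB \ sA := fun h => (Finset.mem_sdiff.mp h).2 hvA
          have hset : {x : DA.ι ⊕ DB.ι | v ∈ bagf x} =
              Sum.inl '' {i : DA.ι | v ∈ DA.bag i} := by
            ext (i | j) <;>
              simp [hbagf, Finset.mem_union, hvS, Finset.mem_inter, hnB]
          rw [hset]
          exact PaperAux.glue_induce_inl (DA.conn v hvA)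
        · have hnA : ∀ i, v ∉ DA.bag i := fun i h => hvnA (DA.bag_sub i h)
          have hset : {x : DA.ι ⊕ DB.ι | v ∈ bagf x} =
              Sum.inr '' {j : DB.ι | v ∈ DB.bag j} := by
            ext (i | j) <;>
              simp [hbagf, Finset.mem_union, hvS, Finset.mem_inter, hnA,
                Finset.mem_sdiff.mpr ⟨hvB, hvnA⟩]
          rw [hset]
          exact PaperAux.glue_induce_inr (DB.conn v hvB) }
  show tw (primalAdj F) sU ≤ _
  refine tw_le_of_td D ?_
  rintro (i | j)
  · have h1 : ((bagf (Sum.inl i)).card : ℤ) ≤ ((DA.bag i).card : ℤ) + (S.card : ℤ) := by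
      exact_mod_cast Finset.card_union_le (DA.bag i) S
    have h2 := hDA' i
    have h3 : itw F A ≤ max (itw F A) (itw F B) := le_max_left _ _
    show ((bagf (Sum.inl i)).card : ℤ) ≤ _
    linarith
  · have h0 : ((DB.bag j ∩ (sB \ sA)).card : ℤ) ≤ ((DB.bag j).card : ℤ) := by
      exact_mod_cast Finset.card_le_card (Finset.inter_subset_left (s₂ := sB \ sA))
    have h1 : ((bagf (Sum.inr j)).card : ℤ) ≤
        ((DB.bag j ∩ (sB \ sA)).card : ℤ) + (S.card : ℤ) := by
      exact_mod_cast Finset.card_union_le (DB.bag j ∩ (sB \ sA)) S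
    have h2 := hDB' j
    have h3 : itw F B ≤ max (itw F A) (itw F B) := le_max_right _ _
    show ((bagf (Sum.inr j)).card : ℤ) ≤ _
    linarith

/-- `itw (A ∪ B) ≤ max (itw A) (itw B) + min (λ A) (λ B)`. -/
theorem statement1 {V E : Type} [Fintype V] [Fintype E] (F : E → Finset V)
    (A B : Finset E) :
    itw F (A ∪ B) ≤
      max (itw F A) (itw F B) +
        (min (lamIn F Finset.univ A) (lamIn F Finset.univ B) : ℤ) := by
  rcases le_total (lamIn F Finset.univ A) (lamIn F Finset.univ B) with h | h
  · have h' : ((lamIn F Finset.univ A : ℤ)) ≤ (lamIn F Finset.univ B : ℤ) := by exact_mod_cast h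
    rw [min_eq_left h']
    exact key F A B
  · have h' : ((lamIn F Finset.univ B : ℤ)) ≤ (lamIn F Finset.univ A : ℤ) := by exact_mod_cast h
    rw [min_eq_right h', Finset.union_comm A B, max_comm]
    exact key F B A

end Paper
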